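/- Let G be a finite abelian group of order 144 that is not cyclic. Then G has no nontrivial near-factorization. -/

import Mathlib

open Finset
open scoped Pointwise

/-- A pair `(A, B)` of subsets of a finite group `G` is a near-factorization of `G`
if `|A| * |B| = |G| - 1` and `A * B = G \ {e}`.  It is nontrivial if `|A| > 1` and `|B| > 1`. -/
def IsNontrivialNearFactorization {G : Type*} [Group G] [Fintype G] [DecidableEq G]
    (A B : Finset G) : Prop :=
  A.card * B.card = Fintype.card G - 1 ∧ A * B = Finset.univ \ {1} ∧
    1 < A.card ∧ 1 < B.card

set_option linter.unusedSectionVars false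

namespace NF

lemma three_mul_le (a : ℕ) : 3 * a ≤ a * a + 2 := by
  rcases Nat.lt_or_ge a 3 with h | h
  · interval_cases a <;> norm_num
  · calc 3 * a ≤ a * a := Nat.mul_le_mul_right a h
      _ ≤ a * a + 2 := Nat.le_add_right _ _

lemma finish8 {Q : Type*} [Fintype Q] (Abar : Q → ℕ) (hq : Fintype.card Q = 8)
    (hA : ∑ y, Abar y = 11)
    (heq : Fintype.card Q * (∑ y, Abar y * Abar y) = 120 + Fintype.card Q) : False := by
  rw [hq] at heq
  have hbound : ∑ y, 3 * Abar y ≤ ∑ y, (Abar y * Abar y + 2) :=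
    Finset.sum_le_sum (fun y _ => three_mul_le (Abar y))
  rw [Finset.sum_add_distrib, Finset.sum_const, ← Finset.mul_sum, hA, card_univ, hq,
    smul_eq_mul] at hbound
  omega


lemma core {Q : Type*} [CommGroup Q] [Fintype Q] [DecidableEq Q]
    {d : ℤ} (hd : d ≤ 0) {m : ℕ} (ee : ZMod m → ℤ√d) (c : ℤ) (hc : 0 < c)
    (p : Q → Q → ZMod m) (P : ℤ√d → Prop)
    (hee0 : ee 0 = (c : ℤ√d))
    (heemul : ∀ a b, ee a * ee b = (c : ℤ√d) * ee (a + b))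
    (heestar : ∀ a b, ee a * star (ee b) = (c : ℤ√d) * ee (a - b))
    (hbil : ∀ t y z, p t (y * z) = p t y + p t z)
    (hsym : ∀ t y, p t y = p y t)
    (horth : ∀ t, t ≠ 1 → ∑ x, ee (p t x) = 0)
    (hP0 : P 0) (hPadd : ∀ x y, P x → P y → P (x + y)) (hPee : ∀ a, P (ee a))
    (hPnorm : ∀ z, P z → c ^ 2 ∣ z.norm)
    (Abar Bbar : Q → ℕ) (k : ℕ) (hk : 1 ≤ k)
    (hconv : ∀ x, ∑ y, Abar y * Bbar (y⁻¹ * x) = if x = 1 then k - 1 else k)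
    (hA : ∑ y, Abar y = 11) :
    Fintype.card Q * (∑ y, Abar y * Abar y) = 120 + Fintype.card Q := by
  classical
  have hp1 : ∀ t, p t 1 = 0 := by
    intro t
    have h := hbil t 1 1
    rw [mul_one] at h
    exact (add_eq_right.mp h.symm)
  set q := Fintype.card Q with hq
  have hq1 : 1 ≤ q := Fintype.card_pos
  set S : Q → ℤ√d := fun t => ∑ y, (Abar y : ℤ√d) * ee (p t y) with hS
  set T : Q → ℤ√d := fun t => ∑ y, (Bbar y : ℤ√d) * ee (p t y) with hT
  have hcast : ∀ x : Q, ((∑ y, Abar y * Bbar (y⁻¹ * x) : ℕ) : ℤ√d)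
      = (k : ℤ√d) - (if x = 1 then 1 else 0) := by
    intro x
    rw [hconv x]
    split_ifs with h
    · rw [Nat.cast_sub hk]; norm_num
    · norm_num
  -- Step 1 : S t * T t = -c^2 for t ≠ 1
  have hST : ∀ t : Q, t ≠ 1 → S t * T t = -((c : ℤ√d) * c) := by
    intro t ht
    have e1 : S t * T t
        = ∑ y, ∑ z, (c : ℤ√d) * (((Abar y : ℤ√d) * (Bbar z : ℤ√d)) * ee (p t (y * z))) := by
      rw [hS, hT, Finset.sum_mul_sum]
      refine sum_congr rfl fun y _ => sum_congr rfl fun z _ => ?_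
      rw [mul_mul_mul_comm, heemul, hbil t y z]
      ring
    have e2 : ∀ y : Q, ∑ z, (c : ℤ√d) * (((Abar y : ℤ√d) * (Bbar z : ℤ√d)) * ee (p t (y * z)))
        = ∑ x, (c : ℤ√d) * (((Abar y : ℤ√d) * (Bbar (y⁻¹ * x) : ℤ√d)) * ee (p t x)) := by
      intro y
      apply Fintype.sum_equiv (Equiv.mulLeft y)
      intro z
      simp [Equiv.mulLeft]
    rw [e1]
    simp_rw [e2]
    rw [Finset.sum_comm]
    have e3 : ∀ x : Q, ∑ y, (c : ℤ√d) * (((Abar y : ℤ√d) * (Bbar (y⁻¹ * x) : ℤ√d)) * ee (p t x))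
        = (c : ℤ√d) * (((k : ℤ√d) - (if x = 1 then 1 else 0)) * ee (p t x)) := by
      intro x
      rw [← Finset.mul_sum, ← Finset.sum_mul]
      congr 2
      rw [← hcast x]
      push_cast
      ring_nf
    simp_rw [e3]
    rw [← Finset.mul_sum]
    have e4 : ∑ x, ((k : ℤ√d) - (if x = 1 then 1 else 0)) * ee (p t x)
        = (k : ℤ√d) * (∑ x, ee (p t x)) - ∑ x, (if x = 1 then 1 else 0) * ee (p t x) := by
      rw [Finset.mul_sum, ← Finset.sum_sub_distrib]
      refine sum_congr rfl fun x _ => ?_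
      ring
    rw [e4, horth t ht]
    have e5 : ∑ x, (if x = 1 then (1:ℤ√d) else 0) * ee (p t x) = ee (p t 1) := by
      rw [Finset.sum_congr rfl (fun x _ => ?_), Finset.sum_ite_eq' univ (1:Q) (fun x => ee (p t x))]
      · simp
      · rw [ite_mul, one_mul, zero_mul]
    rw [e5, hp1, hee0]
    ring
  -- Step 2 : P holds for S t and T t
  have hPmul : ∀ (n : ℕ) (z : ℤ√d), P z → P ((n : ℤ√d) * z) := by
    intro n
    induction n with
    | zero => intro z hz; simpa using hP0
    | succ n ih =>
        intro z hz
        have h := hPadd _ _ (ih z hz) hz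
        have : ((n+1 : ℕ) : ℤ√d) * z = (n : ℤ√d) * z + z := by push_cast; ring
        rwa [this]
  have hPS : ∀ t, P (S t) := by
    intro t
    rw [hS]
    exact Finset.sum_induction _ P hPadd hP0 (fun y _ => hPmul _ _ (hPee _))
  have hPT : ∀ t, P (T t) := by
    intro t
    rw [hT]
    exact Finset.sum_induction _ P hPadd hP0 (fun y _ => hPmul _ _ (hPee _))
  -- Step 3 : norms
  have hnormInt : ∀ a : ℤ, ((a : ℤ√d)).norm = a * a := by
    intro a
    simp [Zsqrtd.norm_def]
  have hSstar : ∀ t, t ≠ 1 → S t * star (S t) = ((c ^ 2 : ℤ) : ℤ√d) := by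
    intro t ht
    have h1 : (S t).norm * (T t).norm = (c^2) * (c^2) := by
      rw [← Zsqrtd.norm_mul, hST t ht]
      have : -((c : ℤ√d) * c) = ((-(c*c) : ℤ) : ℤ√d) := by push_cast; ring
      rw [this, hnormInt]
      ring
    obtain ⟨u, hu⟩ := hPnorm _ (hPS t)
    obtain ⟨v, hv⟩ := hPnorm _ (hPT t)
    have hc2 : (0:ℤ) < c^2 := by positivity
    have hu0 : 0 ≤ u := by nlinarith [Zsqrtd.norm_nonneg hd (S t), hu]
    have huv : u * v = 1 := by
      have h2 : (c^2 * u) * (c^2 * v) = (c^2) * (c^2) := by rw [← hu, ← hv]; exact h1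
      have h3 : (c^2*c^2) * (u*v) = (c^2*c^2) * 1 := by linear_combination h2
      exact mul_left_cancel₀ (by positivity) h3
    have hu1 : u = 1 := Int.eq_one_of_mul_eq_one_right hu0 huv
    rw [← Zsqrtd.norm_eq_mul_conj, hu, hu1, mul_one]
  -- Step 4 : Parseval
  have hstarS : ∀ t, star (S t) = ∑ z, (Abar z : ℤ√d) * star (ee (p t z)) := by
    intro t
    rw [hS, star_sum]
    exact sum_congr rfl fun z _ => by rw [star_mul', star_natCast]
  have inner : ∀ y z : Q, ∑ t, ee (p t (y * z⁻¹)) = if y = z then (q : ℤ√d) * c else 0 := by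
    intro y z
    by_cases h : y = z
    · subst h
      rw [if_pos rfl]
      simp_rw [mul_inv_cancel, hp1, hee0]
      rw [Finset.sum_const, card_univ, nsmul_eq_mul, ← hq]
    · have hw : y * z⁻¹ ≠ 1 := by
        simpa [mul_inv_eq_one] using h
      rw [if_neg h]
      calc ∑ t, ee (p t (y * z⁻¹)) = ∑ t, ee (p (y * z⁻¹) t) := by simp_rw [hsym]
        _ = 0 := horth _ hw
  have parseval : ∑ t, S t * star (S t)
      = ((q : ℤ√d) * c) * ((c : ℤ√d) * ∑ y, (Abar y : ℤ√d) * (Abar y : ℤ√d)) := by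
    have e1 : ∀ t : Q, S t * star (S t)
        = ∑ y, ∑ z, ((Abar y : ℤ√d) * (Abar z : ℤ√d)) * ((c : ℤ√d) * ee (p t (y * z⁻¹))) := by
      intro t
      rw [hS, hstarS t, Finset.sum_mul_sum]
      refine sum_congr rfl fun y _ => sum_congr rfl fun z _ => ?_
      have hpd : p t (y * z⁻¹) = p t y - p t z := by
        have h := hbil t (y * z⁻¹) z
        rw [inv_mul_cancel_right] at h
        rw [eq_sub_iff_add_eq, ← h]
      rw [mul_mul_mul_comm, heestar, hpd]
    simp_rw [e1]
    rw [Finset.sum_comm]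
    have e2 : ∀ y : Q, ∑ t, ∑ z, ((Abar y : ℤ√d) * (Abar z : ℤ√d)) * ((c : ℤ√d) * ee (p t (y * z⁻¹)))
        = ∑ z, ((Abar y : ℤ√d) * (Abar z : ℤ√d)) * ((c : ℤ√d) * ∑ t, ee (p t (y * z⁻¹))) := by
      intro y
      rw [Finset.sum_comm]
      exact sum_congr rfl fun z _ => by rw [← Finset.mul_sum, ← Finset.mul_sum]
    simp_rw [e2, inner]
    have e3 : ∀ y : Q, ∑ z, ((Abar y : ℤ√d) * (Abar z : ℤ√d))
          * ((c : ℤ√d) * (if y = z then (q : ℤ√d) * c else 0))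
        = ((Abar y : ℤ√d) * (Abar y : ℤ√d)) * ((c : ℤ√d) * ((q : ℤ√d) * c)) := by
      intro y
      have h5 : ∀ z : Q, ((Abar y : ℤ√d) * (Abar z : ℤ√d))
            * ((c : ℤ√d) * (if y = z then (q : ℤ√d) * c else 0))
          = if y = z then ((Abar y : ℤ√d) * (Abar y : ℤ√d)) * ((c : ℤ√d) * ((q : ℤ√d) * c)) else 0 := by
        intro z
        split_ifs with h
        · rw [h]
        · simp
      simp_rw [h5]
      simp [Finset.sum_ite_eq]
    simp_rw [e3]
    rw [← Finset.sum_mul]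
    ring
  -- Step 5 : combine
  have hS1 : S 1 = ((11 * c : ℤ) : ℤ√d) := by
    rw [hS]
    have : ∀ y : Q, (Abar y : ℤ√d) * ee (p 1 y) = (Abar y : ℤ√d) * c := by
      intro y
      rw [hsym 1 y, hp1, hee0]
    simp_rw [this]
    rw [← Finset.sum_mul]
    have : (∑ y, (Abar y : ℤ√d)) = ((∑ y, Abar y : ℕ) : ℤ√d) := by push_cast; rfl
    rw [this, hA]
    push_cast
    ring
  have split : ∑ t, S t * star (S t) = S 1 * star (S 1) + ∑ t ∈ univ.erase 1, S t * star (S t) :=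
    (Finset.add_sum_erase _ _ (mem_univ 1)).symm
  have eL : ∑ t, S t * star (S t)
      = ((121 * c^2 + ((q - 1 : ℕ) : ℤ) * c^2 : ℤ) : ℤ√d) := by
    rw [split, hS1]
    have e4 : ∑ t ∈ univ.erase 1, S t * star (S t) = ((q - 1 : ℕ) : ℤ√d) * ((c^2 : ℤ) : ℤ√d) := by
      rw [Finset.sum_congr rfl (fun t ht => hSstar t (Finset.ne_of_mem_erase ht)),
        Finset.sum_const, Finset.card_erase_of_mem (mem_univ 1), card_univ, nsmul_eq_mul]
    rw [e4, star_intCast]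
    push_cast
    ring
  have eR : ((q : ℤ√d) * c) * ((c : ℤ√d) * ∑ y, (Abar y : ℤ√d) * (Abar y : ℤ√d))
      = (((q : ℤ) * c^2 * ((∑ y, Abar y * Abar y : ℕ) : ℤ) : ℤ) : ℤ√d) := by
    have hsum : (((∑ y, Abar y * Abar y : ℕ) : ℤ) : ℤ√d) = ∑ y, (Abar y : ℤ√d) * (Abar y : ℤ√d) := by
      push_cast
      rfl
    push_cast [hsum]
    ring
  have key : (121 * c^2 + ((q - 1 : ℕ) : ℤ) * c^2 : ℤ)
      = ((q : ℤ) * c^2 * ((∑ y, Abar y * Abar y : ℕ) : ℤ)) := by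
    have := eL.symm.trans (parseval.trans eR)
    exact_mod_cast this
  have hqc : ((q - 1 : ℕ) : ℤ) = (q : ℤ) - 1 := by
    rw [Nat.cast_sub hq1]
    norm_num
  rw [hqc] at key
  have key2 : ((120 + q : ℕ) : ℤ) * c^2 = ((q * (∑ y, Abar y * Abar y) : ℕ) : ℤ) * c^2 := by
    push_cast at key ⊢
    linear_combination key
  have key3 : ((120 + q : ℕ) : ℤ) = ((q * (∑ y, Abar y * Abar y) : ℕ) : ℤ) :=
    mul_right_cancel₀ (by positivity) key2
  exact_mod_cast key3.symm



lemma push {G : Type*} [Group G] [Fintype G] [DecidableEq G]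
    {Q : Type*} [Group Q] [Fintype Q] [DecidableEq Q]
    (A B : Finset G) (hAB : A * B = Finset.univ \ {1})
    (hcards : A.card * B.card = Fintype.card G - 1)
    (f : G →* Q) (hf : Function.Surjective f) :
    ∃ k : ℕ, 1 ≤ k ∧ ∀ x : Q,
      ∑ y, (A.filter fun a => f a = y).card * (B.filter fun b => f b = y⁻¹ * x).card
        = if x = 1 then k - 1 else k := by
  classical
  set R : G → ℕ := fun g => ((A ×ˢ B).filter fun ab => ab.1 * ab.2 = g).card with hR
  have hGpos : 1 ≤ Fintype.card G := Fintype.card_pos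
  -- every non-identity has exactly one representation
  have hmemmul : ∀ ab : G × G, ab ∈ A ×ˢ B → ab.1 * ab.2 ∈ Finset.univ \ {1} := by
    intro ab hab
    rw [← hAB]
    rw [mem_product] at hab
    exact mul_mem_mul hab.1 hab.2
  have hsumR : ∑ g ∈ Finset.univ \ {1}, R g = Fintype.card G - 1 := by
    rw [hR, ← Finset.card_eq_sum_card_fiberwise hmemmul, card_product, hcards]
  have hcardt : (Finset.univ \ ({1} : Finset G)).card = Fintype.card G - 1 := by
    rw [Finset.card_sdiff_of_subset (Finset.subset_univ _), card_univ, Finset.card_singleton]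
  have hRpos : ∀ g ∈ Finset.univ \ ({1} : Finset G), 1 ≤ R g := by
    intro g hg
    have hg' : g ∈ A * B := by rw [hAB]; exact hg
    rw [Finset.mem_mul] at hg'
    obtain ⟨a, ha, b, hb, hab⟩ := hg'
    apply Finset.card_pos.mpr
    exact ⟨(a, b), by simp [Finset.mem_filter, Finset.mem_product, ha, hb, hab]⟩
  have hR1 : ∀ g ∈ Finset.univ \ ({1} : Finset G), R g = 1 := by
    by_contra hcon
    push_neg at hcon
    obtain ⟨g0, hg0, hg0ne⟩ := hcon
    have hlt : ∑ g ∈ Finset.univ \ ({1} : Finset G), (fun _ => 1) g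
        < ∑ g ∈ Finset.univ \ ({1} : Finset G), R g := by
      apply Finset.sum_lt_sum hRpos
      exact ⟨g0, hg0, lt_of_le_of_ne (hRpos g0 hg0) (Ne.symm hg0ne)⟩
    rw [Finset.sum_const, smul_eq_mul, mul_one, hcardt, hsumR] at hlt
    exact lt_irrefl _ hlt
  have hR0 : R 1 = 0 := by
    rw [hR]
    rw [Finset.card_eq_zero]
    rw [Finset.filter_eq_empty_iff]
    intro ab hab
    intro h1
    have := hmemmul ab hab
    rw [h1] at this
    simp at this
  have hRval : ∀ g : G, R g = if g = 1 then 0 else 1 := by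
    intro g
    split_ifs with h
    · rw [h]; exact hR0
    · exact hR1 g (by simp [h])
  -- fibers of f all have the same cardinality
  set k := (Finset.univ.filter fun g : G => f g = 1).card with hk
  have hk1 : 1 ≤ k := Finset.card_pos.mpr ⟨1, by simp⟩
  have hfib : ∀ x : Q, (Finset.univ.filter fun g : G => f g = x).card = k := by
    intro x
    obtain ⟨g0, hg0⟩ := hf x
    rw [hk]
    apply Finset.card_bij (fun g _ => g0⁻¹ * g)
    · intro g hg
      simp only [Finset.mem_filter, Finset.mem_univ, true_and] at hg ⊢
      rw [map_mul, map_inv, hg, hg0, inv_mul_cancel]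
    · intro g1 h1 g2 h2 h
      exact mul_left_cancel h
    · intro h hh
      simp only [Finset.mem_filter, Finset.mem_univ, true_and] at hh
      refine ⟨g0 * h, ?_, by group⟩
      simp [Finset.mem_filter, map_mul, hg0, hh]
  refine ⟨k, hk1, fun x => ?_⟩
  -- the double-counted set
  set s := ((A ×ˢ B).filter fun ab => f (ab.1 * ab.2) = x) with hs
  have claim1 : s.card
      = ∑ y, (A.filter fun a => f a = y).card * (B.filter fun b => f b = y⁻¹ * x).card := by
    rw [Finset.card_eq_sum_card_fiberwise (f := fun ab => f ab.1)
      (t := Finset.univ) (fun ab _ => mem_univ _)]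
    refine sum_congr rfl fun y _ => ?_
    have : s.filter (fun ab => f ab.1 = y)
        = (A.filter fun a => f a = y) ×ˢ (B.filter fun b => f b = y⁻¹ * x) := by
      ext ⟨a, b⟩
      simp only [hs, Finset.filter_filter, Finset.mem_filter, Finset.mem_product]
      constructor
      · rintro ⟨⟨ha, hb⟩, hx, hy⟩
        refine ⟨⟨ha, hy⟩, hb, ?_⟩
        rw [map_mul] at hx
        rw [← hy, ← hx]
        group
      · rintro ⟨⟨ha, hy⟩, hb, hbx⟩
        refine ⟨⟨ha, hb⟩, ?_, hy⟩
        rw [map_mul, hy, hbx]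
        group
    rw [this, Finset.card_product]
  have claim2 : s.card = if x = 1 then k - 1 else k := by
    have h1 : s.card = ∑ g ∈ Finset.univ.filter (fun g : G => f g = x), R g := by
      rw [Finset.card_eq_sum_card_fiberwise (f := fun ab : G × G => ab.1 * ab.2)
        (t := Finset.univ.filter (fun g : G => f g = x)) ?_]
      · refine sum_congr rfl fun g hg => ?_
        rw [Finset.mem_filter] at hg
        congr 1
        rw [hs, Finset.filter_filter]
        apply Finset.filter_congr
        intro ab _
        constructor
        · rintro ⟨_, h2⟩; exact h2
        · intro h2; exact ⟨by rw [h2, hg.2], h2⟩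
      · intro ab hab
        rw [hs, Finset.mem_coe, Finset.mem_filter] at hab
        rw [Finset.mem_coe, Finset.mem_filter]
        exact ⟨mem_univ _, hab.2⟩
    rw [h1]
    by_cases hx : x = 1
    · subst hx
      rw [if_pos rfl]
      have h2 : (1 : G) ∈ Finset.univ.filter (fun g : G => f g = 1) := by simp
      rw [← Finset.sum_erase _ (by rw [hRval]; simp : R (1:G) = 0)]
      rw [Finset.sum_congr rfl (fun g hg => ?_), Finset.sum_const, smul_eq_mul, mul_one,
        Finset.card_erase_of_mem h2, hfib 1]
      rw [hRval, if_neg (Finset.ne_of_mem_erase hg)]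
    · rw [if_neg hx]
      rw [Finset.sum_congr rfl (fun g hg => ?_), Finset.sum_const, smul_eq_mul, mul_one, hfib x]
      have hg1 : g ≠ 1 := by
        rw [Finset.mem_filter] at hg
        intro h
        rw [h, map_one] at hg
        exact hx hg.2.symm
      rw [hRval, if_neg hg1]
  rw [← claim1, claim2]



/-- Gaussian-integer values of the character `a ↦ i^a` on `ZMod 4`. -/
def ee4 : ZMod 4 → ℤ√(-1) := fun a =>
  if a = 0 then ⟨1, 0⟩ else if a = 1 then ⟨0, 1⟩ else if a = 2 then ⟨-1, 0⟩ else ⟨0, -1⟩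

/-- Doubled Eisenstein values `2·ω^a` in `ℤ√-3`. -/
def ee3 : ZMod 3 → ℤ√(-3) := fun a =>
  if a = 0 then ⟨2, 0⟩ else if a = 1 then ⟨-1, 1⟩ else ⟨-1, -1⟩

def emb2 : ZMod 2 → ZMod 4 := fun b => if b = 0 then 0 else 2

lemma ee4_zero : ee4 0 = ((1 : ℤ) : ℤ√(-1)) := by decide
lemma ee4_mul : ∀ a b : ZMod 4, ee4 a * ee4 b = ((1:ℤ) : ℤ√(-1)) * ee4 (a + b) := by decide
lemma ee4_star : ∀ a b : ZMod 4, ee4 a * star (ee4 b) = ((1:ℤ) : ℤ√(-1)) * ee4 (a - b) := by decide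

lemma ee3_zero : ee3 0 = ((2 : ℤ) : ℤ√(-3)) := by decide
lemma ee3_mul : ∀ a b : ZMod 3, ee3 a * ee3 b = ((2:ℤ) : ℤ√(-3)) * ee3 (a + b) := by decide
lemma ee3_star : ∀ a b : ZMod 3, ee3 a * star (ee3 b) = ((2:ℤ) : ℤ√(-3)) * ee3 (a - b) := by decide

/-- parity predicate for doubled Eisenstein integers -/
def P3 : ℤ√(-3) → Prop := fun z => z.re % 2 = z.im % 2

lemma P3_zero : P3 0 := rfl
lemma P3_add : ∀ x y : ℤ√(-3), P3 x → P3 y → P3 (x + y) := by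
  intro x y hx hy
  unfold P3 at *
  rw [Zsqrtd.re_add, Zsqrtd.im_add]
  omega
lemma P3_ee : ∀ a : ZMod 3, P3 (ee3 a) := by
  intro a
  unfold P3 ee3
  split_ifs <;> decide
lemma P3_norm : ∀ z : ℤ√(-3), P3 z → (2:ℤ)^2 ∣ z.norm := by
  intro z hz
  unfold P3 at hz
  have h2 : (2:ℤ) ∣ z.re - z.im := by omega
  obtain ⟨w, hw⟩ := h2
  have : z.re = z.im + 2 * w := by omega
  rw [Zsqrtd.norm_def, this]
  exact ⟨z.im * z.im + z.im * w + w * w, by ring⟩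

/- pairings -/
def pQ3 : Multiplicative (ZMod 3 × ZMod 3) → Multiplicative (ZMod 3 × ZMod 3) → ZMod 3 :=
  fun t y => (t.toAdd.1 * y.toAdd.1) + (t.toAdd.2 * y.toAdd.2)

def pQ2a : Multiplicative (ZMod 4 × ZMod 2) → Multiplicative (ZMod 4 × ZMod 2) → ZMod 4 :=
  fun t y => (t.toAdd.1 * y.toAdd.1) + emb2 (t.toAdd.2 * y.toAdd.2)

def pQ2b : Multiplicative (ZMod 2 × ZMod 2 × ZMod 2) → Multiplicative (ZMod 2 × ZMod 2 × ZMod 2)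
    → ZMod 4 :=
  fun t y => emb2 (t.toAdd.1 * y.toAdd.1) + emb2 (t.toAdd.2.1 * y.toAdd.2.1)
    + emb2 (t.toAdd.2.2 * y.toAdd.2.2)

lemma pQ3_bil : ∀ t y z, pQ3 t (y * z) = pQ3 t y + pQ3 t z := by decide
lemma pQ3_sym : ∀ t y, pQ3 t y = pQ3 y t := by decide
lemma pQ3_orth : ∀ t, t ≠ 1 → ∑ x, ee3 (pQ3 t x) = 0 := by decide

lemma pQ2a_bil : ∀ t y z, pQ2a t (y * z) = pQ2a t y + pQ2a t z := by decide
lemma pQ2a_sym : ∀ t y, pQ2a t y = pQ2a y t := by decide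
lemma pQ2a_orth : ∀ t, t ≠ 1 → ∑ x, ee4 (pQ2a t x) = 0 := by decide

lemma pQ2b_bil : ∀ t y z, pQ2b t (y * z) = pQ2b t y + pQ2b t z := by decide
lemma pQ2b_sym : ∀ t y, pQ2b t y = pQ2b y t := by decide
lemma pQ2b_orth : ∀ t, t ≠ 1 → ∑ x, ee4 (pQ2b t x) = 0 := by decide



section helpers

variable {ι : Type} [Fintype ι] [DecidableEq ι] (n : ι → ℕ) [∀ i, NeZero (n i)]

/-- projection onto two coordinates followed by reduction -/
def proj2 (i j : ι) (a b : ℕ) (ha : a ∣ n i) (hb : b ∣ n j) :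
    ((l : ι) → Multiplicative (ZMod (n l))) →* Multiplicative (ZMod a × ZMod b) where
  toFun h := Multiplicative.ofAdd (ZMod.castHom ha (ZMod a) (h i).toAdd,
    ZMod.castHom hb (ZMod b) (h j).toAdd)
  map_one' := by
    simp only [Pi.one_apply, toAdd_one, map_zero]
    rfl
  map_mul' x y := by
    simp only [Pi.mul_apply, toAdd_mul, map_add]
    rw [← ofAdd_add]
    rfl

lemma proj2_surj (i j : ι) (hij : i ≠ j) (a b : ℕ) (ha : a ∣ n i) (hb : b ∣ n j)
    (ha0 : a ≠ 0) (hb0 : b ≠ 0) :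
    Function.Surjective (proj2 n i j a b ha hb) := by
  haveI : NeZero a := ⟨ha0⟩
  haveI : NeZero b := ⟨hb0⟩
  intro zw
  obtain ⟨za, hza⟩ := ZMod.natCast_zmod_surjective (zw.toAdd.1)
  obtain ⟨wb, hwb⟩ := ZMod.natCast_zmod_surjective (zw.toAdd.2)
  set X : Multiplicative (ZMod (n i)) := Multiplicative.ofAdd ((za : ZMod (n i))) with hX
  set Y : Multiplicative (ZMod (n j)) := Multiplicative.ofAdd ((wb : ZMod (n j))) with hY
  set g : (l : ι) → Multiplicative (ZMod (n l)) := Pi.mulSingle i X * Pi.mulSingle j Y with hg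
  refine ⟨g, ?_⟩
  have gi : g i = X := by
    rw [hg, Pi.mul_apply, Pi.mulSingle_eq_same, Pi.mulSingle_eq_of_ne hij, mul_one]
  have gj : g j = Y := by
    rw [hg, Pi.mul_apply, Pi.mulSingle_eq_of_ne hij.symm, Pi.mulSingle_eq_same, one_mul]
  show Multiplicative.ofAdd (ZMod.castHom ha (ZMod a) (g i).toAdd,
    ZMod.castHom hb (ZMod b) (g j).toAdd) = zw
  rw [gi, gj, hX, hY]
  simp only [toAdd_ofAdd, map_natCast]
  rw [hza, hwb]
  exact (ofAdd_toAdd zw)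

/-- projection onto three coordinates, each reduced mod 2 -/
def proj3 (i j l : ι) (ha : 2 ∣ n i) (hb : 2 ∣ n j) (hc : 2 ∣ n l) :
    ((t : ι) → Multiplicative (ZMod (n t))) →* Multiplicative (ZMod 2 × ZMod 2 × ZMod 2) where
  toFun h := Multiplicative.ofAdd (ZMod.castHom ha (ZMod 2) (h i).toAdd,
    ZMod.castHom hb (ZMod 2) (h j).toAdd, ZMod.castHom hc (ZMod 2) (h l).toAdd)
  map_one' := by
    simp only [Pi.one_apply, toAdd_one, map_zero]
    rfl
  map_mul' x y := by
    simp only [Pi.mul_apply, toAdd_mul, map_add]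
    rw [← ofAdd_add]
    rfl

lemma proj3_surj (i j l : ι) (hij : i ≠ j) (hil : i ≠ l) (hjl : j ≠ l)
    (ha : 2 ∣ n i) (hb : 2 ∣ n j) (hc : 2 ∣ n l) :
    Function.Surjective (proj3 n i j l ha hb hc) := by
  intro zw
  obtain ⟨za, hza⟩ := ZMod.natCast_zmod_surjective (zw.toAdd.1)
  obtain ⟨wb, hwb⟩ := ZMod.natCast_zmod_surjective (zw.toAdd.2.1)
  obtain ⟨vc, hvc⟩ := ZMod.natCast_zmod_surjective (zw.toAdd.2.2)
  set X : Multiplicative (ZMod (n i)) := Multiplicative.ofAdd ((za : ZMod (n i))) with hX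
  set Y : Multiplicative (ZMod (n j)) := Multiplicative.ofAdd ((wb : ZMod (n j))) with hY
  set Z : Multiplicative (ZMod (n l)) := Multiplicative.ofAdd ((vc : ZMod (n l))) with hZ
  set g : (t : ι) → Multiplicative (ZMod (n t)) :=
    Pi.mulSingle i X * Pi.mulSingle j Y * Pi.mulSingle l Z with hg
  refine ⟨g, ?_⟩
  have gi : g i = X := by
    rw [hg, Pi.mul_apply, Pi.mul_apply, Pi.mulSingle_eq_same, Pi.mulSingle_eq_of_ne hij,
      Pi.mulSingle_eq_of_ne hil, mul_one, mul_one]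
  have gj : g j = Y := by
    rw [hg, Pi.mul_apply, Pi.mul_apply, Pi.mulSingle_eq_of_ne hij.symm, Pi.mulSingle_eq_same,
      Pi.mulSingle_eq_of_ne hjl, one_mul, mul_one]
  have gl : g l = Z := by
    rw [hg, Pi.mul_apply, Pi.mul_apply, Pi.mulSingle_eq_of_ne hil.symm,
      Pi.mulSingle_eq_of_ne hjl.symm, Pi.mulSingle_eq_same, one_mul, one_mul]
  show Multiplicative.ofAdd (ZMod.castHom ha (ZMod 2) (g i).toAdd,
    ZMod.castHom hb (ZMod 2) (g j).toAdd, ZMod.castHom hc (ZMod 2) (g l).toAdd) = zw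
  rw [gi, gj, gl, hX, hY, hZ]
  simp only [toAdd_ofAdd, map_natCast]
  rw [hza, hwb, hvc]
  exact (ofAdd_toAdd zw)

end helpers

/-- Every non-cyclic abelian group of order 144 surjects onto one of three nice groups. -/
lemma exists_surj {G : Type*} [CommGroup G] [Fintype G]
    (hcard : Fintype.card G = 144) (hnc : ¬ IsCyclic G) :
    (∃ f : G →* Multiplicative (ZMod 3 × ZMod 3), Function.Surjective f) ∨
    (∃ f : G →* Multiplicative (ZMod 4 × ZMod 2), Function.Surjective f) ∨
    (∃ f : G →* Multiplicative (ZMod 2 × ZMod 2 × ZMod 2), Function.Surjective f) := by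
  classical
  obtain ⟨ι, hfin, n, hn, ⟨e⟩⟩ := CommGroup.equiv_prod_multiplicative_zmod_of_finite G
  haveI : ∀ i, NeZero (n i) := fun i => ⟨by have := hn i; omega⟩
  have hprod : ∏ i, n i = 144 := by
    have h1 : Fintype.card G = Fintype.card ((i : ι) → Multiplicative (ZMod (n i))) :=
      Fintype.card_congr e.toEquiv
    rw [hcard, Fintype.card_pi] at h1
    simp only [Fintype.card_multiplicative, ZMod.card] at h1
    exact h1.symm
  -- some two of the n i share a common prime factor
  have hnp : ¬ Pairwise (Function.onFun Nat.Coprime n) := by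
    intro hcop
    apply hnc
    have e2 : Multiplicative (ZMod (∏ i, n i)) ≃* Multiplicative ((i : ι) → ZMod (n i)) :=
      AddEquiv.toMultiplicative (ZMod.prodEquivPi n hcop).toAddEquiv
    have e3 := e2.trans (MulEquiv.piMultiplicative (fun i => ZMod (n i)))
    have e4 := e3.trans e.symm
    exact isCyclic_of_surjective e4 e4.surjective
  simp only [Pairwise, Function.onFun] at hnp
  push_neg at hnp
  obtain ⟨i, j, hij, hcop⟩ := hnp
  set ℓ := (Nat.gcd (n i) (n j)).minFac with hℓ
  have hgcd1 : Nat.gcd (n i) (n j) ≠ 1 := hcop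
  have hℓp : Nat.Prime ℓ := Nat.minFac_prime hgcd1
  have hℓi : ℓ ∣ n i := (Nat.minFac_dvd _).trans (Nat.gcd_dvd_left _ _)
  have hℓj : ℓ ∣ n j := (Nat.minFac_dvd _).trans (Nat.gcd_dvd_right _ _)
  have hdvd144 : ∀ l : ι, n l ∣ 144 := by
    intro l
    rw [← hprod]
    exact Finset.dvd_prod_of_mem n (mem_univ l)
  have hℓ23 : ℓ = 2 ∨ ℓ = 3 := by
    have h144 : ℓ ∣ 2^4 * 3^2 := by
      have := hℓi.trans (hdvd144 i)
      norm_num at this ⊢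
      exact this
    rcases (Nat.Prime.dvd_mul hℓp).mp h144 with h | h
    · exact Or.inl ((Nat.prime_dvd_prime_iff_eq hℓp Nat.prime_two).mp
        (hℓp.dvd_of_dvd_pow h))
    · exact Or.inr ((Nat.prime_dvd_prime_iff_eq hℓp Nat.prime_three).mp
        (hℓp.dvd_of_dvd_pow h))
  rcases hℓ23 with h2 | h3
  · -- prime 2 case
    rw [h2] at hℓi hℓj
    by_cases h4i : 4 ∣ n i
    · refine Or.inr (Or.inl ⟨(proj2 n i j 4 2 h4i hℓj).comp e.toMonoidHom, ?_⟩)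
      exact (proj2_surj n i j hij 4 2 h4i hℓj (by norm_num) (by norm_num)).comp e.surjective
    by_cases h4j : 4 ∣ n j
    · refine Or.inr (Or.inl ⟨(proj2 n j i 4 2 h4j hℓi).comp e.toMonoidHom, ?_⟩)
      exact (proj2_surj n j i hij.symm 4 2 h4j hℓi (by norm_num) (by norm_num)).comp e.surjective
    -- both n i, n j are ≡ 2 mod 4 : find a third even coordinate
    obtain ⟨u, hu⟩ := id hℓi
    obtain ⟨v, hv⟩ := id hℓj
    have hu2 : ¬ 2 ∣ u := fun ⟨w, hw⟩ => h4i ⟨w, by omega⟩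
    have hv2 : ¬ 2 ∣ v := fun ⟨w, hw⟩ => h4j ⟨w, by omega⟩
    set R := ∏ l ∈ (univ.erase i).erase j, n l with hR
    have hprod2 : n i * (n j * R) = 144 := by
      rw [hR, Finset.mul_prod_erase _ n (Finset.mem_erase.mpr ⟨hij.symm, mem_univ j⟩),
        Finset.mul_prod_erase _ n (mem_univ i), hprod]
    have h36 : (u * v) * R = 36 := by
      have h4 : 4 * ((u * v) * R) = 144 := by rw [← hprod2, hu, hv]; ring
      omega
    have hcop2 : Nat.Coprime 2 (u * v) := by
      rcases Nat.coprime_or_dvd_of_prime Nat.prime_two (u * v) with h | h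
      · exact h
      · rcases (Nat.Prime.dvd_mul Nat.prime_two).mp h with h | h
        · exact absurd h hu2
        · exact absurd h hv2
    have hcop4 : Nat.Coprime 4 (u * v) := by
      have := Nat.Coprime.pow_left 2 hcop2
      norm_num at this ⊢
      exact this
    have h4R : 4 ∣ R := by
      apply Nat.Coprime.dvd_of_dvd_mul_left hcop4
      exact ⟨9, by omega⟩
    have h2R : 2 ∣ R := dvd_trans (by norm_num) h4R
    obtain ⟨k, hk, h2k⟩ := (Nat.prime_two.prime).exists_mem_finset_dvd (hR ▸ h2R)
    have hki : k ≠ i := (Finset.mem_erase.mp (Finset.mem_of_mem_erase hk)).1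
    have hkj : k ≠ j := (Finset.mem_erase.mp hk).1
    by_cases h4k : 4 ∣ n k
    · refine Or.inr (Or.inl ⟨(proj2 n k i 4 2 h4k hℓi).comp e.toMonoidHom, ?_⟩)
      exact (proj2_surj n k i hki 4 2 h4k hℓi (by norm_num) (by norm_num)).comp e.surjective
    · refine Or.inr (Or.inr ⟨(proj3 n i j k hℓi hℓj h2k).comp
        e.toMonoidHom, ?_⟩)
      exact (proj3_surj n i j k hij hki.symm hkj.symm hℓi hℓj h2k).comp e.surjective
  · -- prime 3 case
    rw [h3] at hℓi hℓj
    refine Or.inl ⟨(proj2 n i j 3 3 hℓi hℓj).comp e.toMonoidHom, ?_⟩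
    exact (proj2_surj n i j hij 3 3 hℓi hℓj (by norm_num) (by norm_num)).comp e.surjective


theorem main {G : Type*} [CommGroup G] [Fintype G]
    [DecidableEq G] (hcard : Fintype.card G = 144) (hnc : ¬ IsCyclic G) :
    ¬ ∃ A B : Finset G, IsNontrivialNearFactorization A B := by
  rintro ⟨A0, B0, hprod0, hAB0, hA10, hB10⟩
  have h143 : A0.card * B0.card = 143 := by rw [hprod0, hcard]
  have hdiv : (A0.card = 11 ∧ B0.card = 13) ∨ (A0.card = 13 ∧ B0.card = 11) := by
    have hd : A0.card ∣ 143 := ⟨B0.card, h143.symm⟩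
    have hmem : A0.card ∈ Nat.divisors 143 := Nat.mem_divisors.mpr ⟨hd, by norm_num⟩
    have hset : Nat.divisors 143 = {1, 11, 13, 143} := by decide
    rw [hset] at hmem
    simp only [Finset.mem_insert, Finset.mem_singleton] at hmem
    rcases hmem with h | h | h | h <;> rw [h] at h143 <;> omega
  -- arrange |A| = 11
  obtain ⟨A, B, hAB, hprod, hA11, hB13⟩ :
      ∃ A B : Finset G, A * B = Finset.univ \ {1} ∧
        A.card * B.card = Fintype.card G - 1 ∧ A.card = 11 ∧ B.card = 13 := by
    rcases hdiv with ⟨h1, h2⟩ | ⟨h1, h2⟩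
    · exact ⟨A0, B0, hAB0, hprod0, h1, h2⟩
    · exact ⟨B0, A0, by rw [mul_comm]; exact hAB0, by rw [mul_comm]; exact hprod0, h2, h1⟩
  rcases exists_surj hcard hnc with ⟨f, hf⟩ | ⟨f, hf⟩ | ⟨f, hf⟩
  · -- quotient (Z/3)²
    obtain ⟨k, hk1, hconv⟩ := push A B hAB hprod f hf
    set Abar := fun y => (A.filter fun a => f a = y).card with hAbar
    set Bbar := fun y => (B.filter fun b => f b = y).card with hBbar
    have hAsum : ∑ y, Abar y = 11 := by
      rw [hAbar, ← Finset.card_eq_sum_card_fiberwise (fun a _ => mem_univ (f a)), hA11]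
    have heq := core (by norm_num : (-3:ℤ) ≤ 0) ee3 2 (by norm_num) pQ3 P3
      ee3_zero ee3_mul ee3_star pQ3_bil pQ3_sym pQ3_orth P3_zero P3_add P3_ee P3_norm
      Abar Bbar k hk1 hconv hAsum
    have hq9 : Fintype.card (Multiplicative (ZMod 3 × ZMod 3)) = 9 := by
      simp [Fintype.card_multiplicative, Fintype.card_prod, ZMod.card]
    rw [hq9] at heq
    omega
  · -- quotient Z/4 × Z/2
    obtain ⟨k, hk1, hconv⟩ := push A B hAB hprod f hf
    set Abar := fun y => (A.filter fun a => f a = y).card with hAbar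
    set Bbar := fun y => (B.filter fun b => f b = y).card with hBbar
    have hAsum : ∑ y, Abar y = 11 := by
      rw [hAbar, ← Finset.card_eq_sum_card_fiberwise (fun a _ => mem_univ (f a)), hA11]
    have heq := core (by norm_num : (-1:ℤ) ≤ 0) ee4 1 (by norm_num) pQ2a (fun _ => True)
      ee4_zero ee4_mul ee4_star pQ2a_bil pQ2a_sym pQ2a_orth trivial
      (fun _ _ _ _ => trivial) (fun _ => trivial) (fun z _ => by simpa using one_dvd z.norm)
      Abar Bbar k hk1 hconv hAsum
    exact finish8 Abar (by simp [Fintype.card_multiplicative, Fintype.card_prod, ZMod.card])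
      hAsum heq
  · -- quotient (Z/2)³
    obtain ⟨k, hk1, hconv⟩ := push A B hAB hprod f hf
    set Abar := fun y => (A.filter fun a => f a = y).card with hAbar
    set Bbar := fun y => (B.filter fun b => f b = y).card with hBbar
    have hAsum : ∑ y, Abar y = 11 := by
      rw [hAbar, ← Finset.card_eq_sum_card_fiberwise (fun a _ => mem_univ (f a)), hA11]
    have heq := core (by norm_num : (-1:ℤ) ≤ 0) ee4 1 (by norm_num) pQ2b (fun _ => True)
      ee4_zero ee4_mul ee4_star pQ2b_bil pQ2b_sym pQ2b_orth trivial
      (fun _ _ _ _ => trivial) (fun _ => trivial) (fun z _ => by simpa using one_dvd z.norm)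
      Abar Bbar k hk1 hconv hAsum
    exact finish8 Abar (by simp [Fintype.card_multiplicative, Fintype.card_prod, ZMod.card])
      hAsum heq

end NF

theorem no_near_factorization_order_144 {G : Type*} [CommGroup G] [Fintype G]
    [DecidableEq G] (hcard : Fintype.card G = 144) (hnc : ¬ IsCyclic G) :
    ¬ ∃ A B : Finset G, IsNontrivialNearFactorization A B :=
  NF.main hcard hnc
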